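/- arXiv:1505.02415 — 2 statements merged into one kernel-verified Lean document; each statement's English description precedes it below -/
import Mathlib

section
/- Let η ∈ 𝔻 and β = −2η/(1 + |η|²), and let p : 𝔻 → 𝔻 be any holomorphic function with |p| < 1 on 𝔻 and boundary values of modulus 1 a.e., satisfying p(0) = η². Then the function h(λ) = (β + conj(β)·p(λ), p(λ)) maps 𝔻 into Γ, has h(0) = (−2η, η²), and |β| ≤ 1 with the point (β + conj(β)w, w) ∈ Γ for all w ∈ 𝔻⁻. -/
open Complex ComplexConjugate MeasureTheory

/-- The closed symmetrized bidisc, via the membership criterion. -/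
def symGamma : Set (ℂ × ℂ) :=
  {x | ‖x.1‖ ≤ 2 ∧
    ‖x.1 - conj x.1 * x.2‖ ≤ 1 - ‖x.2‖ ^ 2}

lemma key_mem (β : ℂ) (hβ1 : ‖β‖ ≤ 1) (w : ℂ) (hw : ‖w‖ ≤ 1) :
    (β + conj β * w, w) ∈ symGamma := by
  have hwn : Complex.normSq w ≤ 1 := by rw [← Complex.sq_norm]; nlinarith [norm_nonneg w]
  constructor
  · calc ‖β + conj β * w‖
        ≤ ‖β‖ + ‖conj β * w‖ := norm_add_le _ _
      _ = ‖β‖ + ‖β‖ * ‖w‖ := by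
          rw [norm_mul, Complex.norm_conj]
      _ ≤ 1 + 1 * 1 := by gcongr
      _ = 2 := by norm_num
  · have h1 : (β + conj β * w) - conj (β + conj β * w) * w
        = β * (1 - (Complex.normSq w : ℂ)) := by
      simp only [map_add, map_mul, Complex.conj_conj]
      linear_combination (-β) * Complex.mul_conj w
    show ‖(β + conj β * w) - conj (β + conj β * w) * w‖ ≤ 1 - ‖w‖ ^ 2
    rw [h1, norm_mul]
    have hns : ‖(1 - (Complex.normSq w : ℂ))‖ = 1 - ‖w‖ ^ 2 := by
      rw [show (1 : ℂ) - (Complex.normSq w : ℂ) = ((1 - Complex.normSq w : ℝ) : ℂ) by push_cast; ring,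
        Complex.norm_real, Real.norm_eq_abs, _root_.abs_of_nonneg (by linarith), Complex.sq_norm]
    rw [hns]
    have h2 : (0:ℝ) ≤ 1 - ‖w‖ ^ 2 := by nlinarith [norm_nonneg w]
    nlinarith

theorem flat_disc_in_Gamma (η : ℂ) (hη : ‖η‖ < 1) (β : ℂ)
    (hβ : β = -2 * η / (1 + (‖η‖ : ℂ) ^ 2))
    (p : ℂ → ℂ) (hol : DifferentiableOn ℂ p (Metric.ball (0 : ℂ) 1))
    (hlt : ∀ l : ℂ, ‖l‖ < 1 → ‖p l‖ < 1)
    (hbdry : ∀ᵐ θ : ℝ, ∃ l : ℂ, ‖l‖ = 1 ∧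
      Filter.Tendsto (fun r : ℝ => p ((r : ℂ) * Complex.exp (θ * Complex.I)))
        (nhdsWithin 1 (Set.Iio 1)) (nhds l))
    (hp0 : p 0 = η ^ 2) :
    (∀ l : ℂ, ‖l‖ < 1 → (β + conj β * p l, p l) ∈ symGamma) ∧
    (β + conj β * p 0, p 0) = (-2 * η, η ^ 2) ∧
    ‖β‖ ≤ 1 ∧
    ∀ w : ℂ, ‖w‖ ≤ 1 → (β + conj β * w, w) ∈ symGamma := by
  have ha : (0:ℝ) ≤ ‖η‖ := norm_nonneg η
  have hdenR : (0:ℝ) < 1 + ‖η‖^2 := by positivity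
  have hden : (1 + (‖η‖ : ℂ)^2) ≠ 0 := by
    rw [show (1 + (‖η‖ : ℂ)^2) = ((1 + ‖η‖^2 : ℝ) : ℂ) by push_cast; ring]
    exact Complex.ofReal_ne_zero.mpr (ne_of_gt hdenR)
  have habs : ‖β‖ = 2 * ‖η‖ / (1 + ‖η‖^2) := by
    rw [hβ, show (1 + (‖η‖ : ℂ)^2) = ((1 + ‖η‖^2 : ℝ) : ℂ) by push_cast; ring,
      norm_div, norm_mul, Complex.norm_real, Real.norm_eq_abs, _root_.abs_of_nonneg (le_of_lt hdenR)]
    norm_num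
  have hβ1 : ‖β‖ ≤ 1 := by
    rw [habs, div_le_one hdenR]
    nlinarith [sq_nonneg (‖η‖ - 1)]
  have key : η * conj η = ((‖η‖ : ℂ))^2 := by
    rw [Complex.mul_conj, ← Complex.sq_norm]; push_cast; ring
  have hc : conj β = -2 * conj η / (1 + (‖η‖ : ℂ)^2) := by
    rw [hβ, map_div₀]
    simp [Complex.conj_ofReal, map_ofNat]
  have h0 : β + conj β * η ^ 2 = -2 * η := by
    rw [hc, hβ]
    field_simp
    linear_combination (-η) * key
  refine ⟨fun l hl => key_mem β hβ1 (p l) (le_of_lt (hlt l hl)), ?_, hβ1, fun w hw => key_mem β hβ1 w hw⟩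
  rw [hp0]
  exact Prod.ext h0 rfl
end

section
/- Let η ∈ 𝕋, κ ∈ 𝕋, α ∈ 𝔻, and define p(λ) = η²κ(λ − α)/(1 − conj(α)λ) and s(λ) = −η − conj(η)·p(λ) for λ ∈ 𝔻. Then for every λ ∈ 𝔻, the point (s(λ), p(λ)) lies in Γ, and for every λ ∈ 𝕋 it lies in bΓ. -/
open Complex ComplexConjugate

/-- The distinguished boundary of the symmetrized bidisc, via the membership criterion. -/
def bGamma : Set (ℂ × ℂ) :=
  {x | ‖x.1‖ ≤ 2 ∧ ‖x.2‖ = 1 ∧ x.1 = conj x.1 * x.2}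

lemma sq_diff_identity (α l : ℂ) :
    ‖1 - conj α * l‖ ^ 2 - ‖l - α‖ ^ 2
      = (1 - ‖α‖ ^ 2) * (1 - ‖l‖ ^ 2) := by
  rw [Complex.sq_norm, Complex.sq_norm, Complex.sq_norm, Complex.sq_norm]
  have h : ((Complex.normSq (1 - conj α * l) : ℂ) - Complex.normSq (l - α))
      = ((1 - Complex.normSq α) * (1 - Complex.normSq l) : ℝ) := by
    rw [← Complex.mul_conj, ← Complex.mul_conj]
    push_cast [← Complex.mul_conj]
    simp only [map_sub, map_mul, map_one, Complex.conj_conj]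
    ring
  exact_mod_cast congrArg Complex.re h

lemma blaschke_abs (η κ α l : ℂ)
    (hη : ‖η‖ = 1) (hκ : ‖κ‖ = 1) :
    ‖η ^ 2 * κ * (l - α) / (1 - conj α * l)‖
      = ‖l - α‖ / ‖1 - conj α * l‖ := by
  simp [map_div₀, map_mul, map_pow, hη, hκ]

theorem superficial_Gamma_inner (η κ α : ℂ)
    (hη : ‖η‖ = 1) (hκ : ‖κ‖ = 1) (hα : ‖α‖ < 1)
    (p s : ℂ → ℂ)
    (hp : ∀ l : ℂ, p l = η ^ 2 * κ * (l - α) / (1 - conj α * l))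
    (hs : ∀ l : ℂ, s l = -η - conj η * p l) :
    (∀ l : ℂ, ‖l‖ < 1 → (s l, p l) ∈ symGamma) ∧
    (∀ l : ℂ, ‖l‖ = 1 → (s l, p l) ∈ bGamma) := by
  -- general facts for |l| ≤ 1
  have hden : ∀ l : ℂ, ‖l‖ ≤ 1 → (1 : ℂ) - conj α * l ≠ 0 := by
    intro l hl h
    have : ‖conj α * l‖ < 1 := by
      rw [norm_mul, Complex.norm_conj]
      calc ‖α‖ * ‖l‖ ≤ ‖α‖ * 1 :=
            mul_le_mul_of_nonneg_left hl (norm_nonneg α)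
        _ < 1 := by simpa using hα
    have h1 : conj α * l = 1 := by linear_combination -h
    rw [h1] at this
    simp at this
  have hple : ∀ l : ℂ, ‖l‖ ≤ 1 → ‖p l‖ ≤ 1 := by
    intro l hl
    rw [hp, blaschke_abs η κ α l hη hκ]
    have hd : 0 < ‖1 - conj α * l‖ := by
      simpa [norm_pos_iff] using hden l hl
    rw [div_le_one hd]
    have key := sq_diff_identity α l
    have ha2 : ‖α‖ ^ 2 < 1 := by nlinarith [norm_nonneg α]
    have hl2 : ‖l‖ ^ 2 ≤ 1 := by nlinarith [norm_nonneg l]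
    have h2 : ‖l - α‖ ^ 2 ≤ ‖1 - conj α * l‖ ^ 2 := by
      nlinarith [mul_nonneg (by linarith : (0:ℝ) ≤ 1 - ‖α‖ ^ 2)
        (by linarith : (0:ℝ) ≤ 1 - ‖l‖ ^ 2)]
    nlinarith [norm_nonneg (l - α), norm_nonneg (1 - conj α * l)]
  have hsabs : ∀ l : ℂ, ‖l‖ ≤ 1 → ‖s l‖ ≤ 2 := by
    intro l hl
    rw [hs]
    calc ‖-η - conj η * p l‖
        ≤ ‖-η‖ + ‖conj η * p l‖ := by
          simpa [sub_eq_add_neg] using norm_add_le (-η) (-(conj η * p l))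
      _ = 1 + ‖p l‖ := by simp [hη]
      _ ≤ 2 := by linarith [hple l hl]
  have hkey : ∀ l : ℂ, s l - conj (s l) * p l = -η * (1 - (Complex.normSq (p l) : ℂ)) := by
    intro l
    rw [hs]
    simp only [map_sub, map_neg, map_mul, Complex.conj_conj]
    rw [show ((Complex.normSq (p l) : ℂ)) = conj (p l) * p l by
      rw [mul_comm]; exact (Complex.mul_conj _).symm]
    ring
  have habskey : ∀ l : ℂ, ‖l‖ ≤ 1 →
      ‖s l - conj (s l) * p l‖ = 1 - ‖p l‖ ^ 2 := by
    intro l hl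
    rw [hkey l, norm_mul, norm_neg, hη, one_mul]
    have h1 : Complex.normSq (p l) ≤ 1 := by
      rw [← Complex.sq_norm]
      nlinarith [hple l hl, norm_nonneg (p l)]
    rw [show (1 : ℂ) - (Complex.normSq (p l) : ℂ) = ((1 - Complex.normSq (p l) : ℝ) : ℂ) by
      push_cast; ring]
    rw [Complex.norm_real, Real.norm_eq_abs, _root_.abs_of_nonneg (by linarith), Complex.sq_norm]
  constructor
  · intro l hl
    refine ⟨hsabs l hl.le, ?_⟩
    rw [habskey l hl.le]
  · intro l hl
    have hl' : ‖l‖ ≤ 1 := hl.le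
    have hpeq : ‖p l‖ = 1 := by
      rw [hp, blaschke_abs η κ α l hη hκ]
      have hd : 0 < ‖1 - conj α * l‖ := by
        simpa [norm_pos_iff] using hden l hl'
      rw [div_eq_one_iff_eq hd.ne']
      have key := sq_diff_identity α l
      rw [hl] at key
      nlinarith [norm_nonneg (l - α), norm_nonneg (1 - conj α * l)]
    refine ⟨hsabs l hl', hpeq, ?_⟩
    have := hkey l
    rw [show Complex.normSq (p l) = 1 by rw [← Complex.sq_norm, hpeq]; norm_num] at this
    simp at this
    linear_combination this
end
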